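/- Two roots in a c-cluster removed and exchanged cannot have equal τ_c-depth: if C' ∪ {α} and C' ∪ {β} are both c-clusters with α ≠ β, then R_c(α) ≠ R_c(β), where R_c(γ) = min{m ≥ 0 : τ_c^{-m}(γ) ∈ -Δ}. -/

import Mathlib

/-- A finite crystallographic root system of rank `n`, presented in the root lattice
`ℤ^n` with the simple roots `α_i = e_i` as standard basis vectors. -/
structure CrysRootDatum (n : ℕ) where
  C : Matrix (Fin n) (Fin n) ℤ
  roots : Finset (Fin n → ℤ)
  diag : ∀ i, C i i = 2
  offdiag : ∀ i j, i ≠ j → C i j ≤ 0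
  symmetrizable : ∃ d : Fin n → ℤ, (∀ i, 0 < d i) ∧ ∀ i j, d i * C i j = d j * C j i
  zero_not_mem : (0 : Fin n → ℤ) ∉ roots
  simple_mem : ∀ i, (Pi.single i 1 : Fin n → ℤ) ∈ roots
  sign_coherent : ∀ r ∈ roots, (∀ j, 0 ≤ r j) ∨ (∀ j, r j ≤ 0)
  reflect_mem : ∀ i, ∀ r ∈ roots, (r - (∑ j, C i j * r j) • Pi.single i 1) ∈ roots
  neg_mem : ∀ r ∈ roots, -r ∈ roots
  reduced : ∀ (c : ℤ) (i : Fin n), c • (Pi.single i 1 : Fin n → ℤ) ∈ roots → c = 1 ∨ c = -1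

namespace CrysRootDatum

variable {n : ℕ} (R : CrysRootDatum n)

/-- The simple reflection `s_i` acting on the root lattice. -/
def sref (i : Fin n) (v : Fin n → ℤ) : Fin n → ℤ :=
  v - (∑ j, R.C i j * v j) • Pi.single i 1

/-- `v` is a positive root. -/
def IsPos (v : Fin n → ℤ) : Prop := v ∈ R.roots ∧ ∀ j, 0 ≤ v j

/-- The set `Φ_{≥-1} = Φ⁺ ∪ (-Δ)` of almost positive roots. -/
def almostPos : Set (Fin n → ℤ) :=
  {v | R.IsPos v ∨ ∃ i, v = -(Pi.single i 1 : Fin n → ℤ)}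

open Classical in
/-- The map `σ_i`. -/
noncomputable def sigmaMap (i : Fin n) (v : Fin n → ℤ) : Fin n → ℤ :=
  if (∃ j, v = -(Pi.single j 1 : Fin n → ℤ)) ∧ v ≠ -(Pi.single i 1 : Fin n → ℤ)
  then v else R.sref i v

/-- For the Coxeter element `c = c_1 ⋯ c_n` recorded as `l = [c_1, …, c_n]`, the map
`τ_c = σ_{c_1} ∘ ⋯ ∘ σ_{c_n}`. -/
noncomputable def tauC (l : List (Fin n)) (v : Fin n → ℤ) : Fin n → ℤ :=
  l.foldr (fun i u => R.sigmaMap i u) v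

/-- The inverse map `τ_c⁻¹ = σ_{c_n} ∘ ⋯ ∘ σ_{c_1}` (each `σ_i` is an involution on
the set of almost positive roots). -/
noncomputable def tauCInv (l : List (Fin n)) (v : Fin n → ℤ) : Fin n → ℤ :=
  l.foldl (fun u i => R.sigmaMap i u) v

/-- `R_c(γ) = min { m ≥ 0 : τ_c^{-m}(γ) ∈ -Δ }`. -/
noncomputable def Rdepth (l : List (Fin n)) (γ : Fin n → ℤ) : ℕ :=
  sInf {m : ℕ | ∃ i, (R.tauCInv l)^[m] γ = -(Pi.single i 1 : Fin n → ℤ)}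

end CrysRootDatum


namespace CrysRootDatum

variable {n : ℕ} (R : CrysRootDatum n)

/-- Shorthand for the `i`-th entry of `C v`. -/
def cs (i : Fin n) (v : Fin n → ℤ) : ℤ := ∑ j, R.C i j * v j

lemma sref_def (i : Fin n) (v : Fin n → ℤ) :
    R.sref i v = v - (R.cs i v) • Pi.single i 1 := rfl

lemma sref_apply (i : Fin n) (v : Fin n → ℤ) (j : Fin n) :
    R.sref i v j = v j - (R.cs i v) * (Pi.single i 1 : Fin n → ℤ) j := by
  simp [sref, cs, smul_eq_mul]

lemma sref_apply_ne (i : Fin n) (v : Fin n → ℤ) {j : Fin n} (h : j ≠ i) :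
    R.sref i v j = v j := by
  simp [sref_apply, Pi.single_eq_of_ne h]

lemma sref_apply_self (i : Fin n) (v : Fin n → ℤ) :
    R.sref i v i = v i - R.cs i v := by
  simp [sref_apply]

lemma cs_sref (i k : Fin n) (v : Fin n → ℤ) :
    R.cs i (R.sref k v) = R.cs i v - R.cs k v * R.C i k := by
  have : ∀ j, R.C i j * R.sref k v j
      = R.C i j * v j - (if j = k then R.C i j * R.cs k v else 0) := by
    intro j
    by_cases hj : j = k
    · subst hj; simp [sref_apply_self]; ring
    · simp [R.sref_apply_ne k v hj, hj]
  simp only [cs, this, Finset.sum_sub_distrib, Finset.sum_ite_eq', Finset.mem_univ, if_true]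
  ring

lemma sref_mem (i : Fin n) {r : Fin n → ℤ} (h : r ∈ R.roots) :
    R.sref i r ∈ R.roots := R.reflect_mem i r h

lemma sref_sref (i : Fin n) (v : Fin n → ℤ) :
    R.sref i (R.sref i v) = v := by
  have h := R.cs_sref i i v
  rw [R.diag] at h
  rw [sref_def (v := R.sref i v), h, sref_def]
  ext j
  simp only [Pi.sub_apply, Pi.smul_apply, smul_eq_mul]
  ring

lemma isPos_ne_zero {r : Fin n → ℤ} (h : R.IsPos r) : r ≠ 0 := by
  intro h0; exact R.zero_not_mem (h0 ▸ h.1)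

lemma isPos_single (i : Fin n) : R.IsPos (Pi.single i 1) := by
  refine ⟨R.simple_mem i, fun j => ?_⟩
  by_cases hj : j = i
  · subst hj; simp
  · simp [Pi.single_eq_of_ne hj]

lemma isPos_ne_negSingle {r : Fin n → ℤ} (h : R.IsPos r) (i : Fin n) :
    r ≠ -(Pi.single i 1 : Fin n → ℤ) := by
  intro he
  have := h.2 i
  rw [he] at this
  simp at this

lemma negSingle_inj {i j : Fin n}
    (h : -(Pi.single i 1 : Fin n → ℤ) = -(Pi.single j 1 : Fin n → ℤ)) : i = j := by
  by_contra hij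
  have := congrFun h i
  simp [Pi.single_eq_of_ne hij] at this

lemma sref_single_self (i : Fin n) :
    R.sref i (Pi.single i 1) = -(Pi.single i 1 : Fin n → ℤ) := by
  have hcs : R.cs i (Pi.single i 1) = 2 := by
    have : ∀ j, R.C i j * (Pi.single i 1 : Fin n → ℤ) j
        = if j = i then R.C i i else 0 := by
      intro j
      by_cases hj : j = i
      · subst hj; simp
      · simp [Pi.single_eq_of_ne hj, hj]
    simp [cs, this, R.diag i]
  rw [sref_def, hcs]
  ext j; simp; ring

lemma sref_neg (i : Fin n) (v : Fin n → ℤ) : R.sref i (-v) = -(R.sref i v) := by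
  have hcs : R.cs i (-v) = -(R.cs i v) := by simp [cs, Finset.sum_neg_distrib]
  rw [sref_def, sref_def, hcs]
  ext j; simp; ring

lemma sref_negSingle_self (i : Fin n) :
    R.sref i (-(Pi.single i 1 : Fin n → ℤ)) = Pi.single i 1 := by
  rw [R.sref_neg, R.sref_single_self]; simp

/-- `s_i` of a positive root other than `α_i` is a positive root. -/
lemma sref_isPos (i : Fin n) {r : Fin n → ℤ} (h : R.IsPos r)
    (hne : r ≠ (Pi.single i 1 : Fin n → ℤ)) : R.IsPos (R.sref i r) := by
  have hmem : R.sref i r ∈ R.roots := R.sref_mem i h.1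
  by_cases hex : ∃ j, j ≠ i ∧ 0 < r j
  · obtain ⟨j, hji, hj⟩ := hex
    have hj' : 0 < R.sref i r j := by rw [R.sref_apply_ne i r hji]; exact hj
    refine ⟨hmem, fun k => ?_⟩
    rcases R.sign_coherent _ hmem with hp | hn
    · exact hp k
    · exact absurd (hn j) (by omega)
  · push_neg at hex
    have hall : ∀ j, j ≠ i → r j = 0 := fun j hj => le_antisymm (hex j hj) (h.2 j)
    have hr : r = (r i) • (Pi.single i 1 : Fin n → ℤ) := by
      ext j
      by_cases hj : j = i
      · subst hj; simp
      · simp [Pi.single_eq_of_ne hj, hall j hj]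
    rcases R.reduced (r i) i (hr ▸ h.1) with h1 | h1
    · exact absurd (by rw [hr, h1]; simp) hne
    · exact absurd (h.2 i) (by omega)

lemma mem_almostPos {v : Fin n → ℤ} :
    v ∈ R.almostPos ↔ R.IsPos v ∨ ∃ i, v = -(Pi.single i 1 : Fin n → ℤ) := Iff.rfl

lemma sigmaMap_of_isPos (i : Fin n) {v : Fin n → ℤ} (h : R.IsPos v) :
    R.sigmaMap i v = R.sref i v := by
  rw [sigmaMap, if_neg]
  rintro ⟨⟨j, hj⟩, -⟩
  exact R.isPos_ne_negSingle h j hj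

lemma sigmaMap_negSingle_of_ne (i j : Fin n) (hji : j ≠ i) :
    R.sigmaMap i (-(Pi.single j 1 : Fin n → ℤ)) = -(Pi.single j 1 : Fin n → ℤ) := by
  rw [sigmaMap, if_pos]
  exact ⟨⟨j, rfl⟩, fun he => hji (negSingle_inj he)⟩

lemma sigmaMap_negSingle_self (i : Fin n) :
    R.sigmaMap i (-(Pi.single i 1 : Fin n → ℤ)) = Pi.single i 1 := by
  rw [sigmaMap, if_neg, R.sref_negSingle_self]
  rintro ⟨-, hne⟩
  exact hne rfl

lemma sigmaMap_mem (i : Fin n) {v : Fin n → ℤ} (h : v ∈ R.almostPos) :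
    R.sigmaMap i v ∈ R.almostPos := by
  rcases h with hp | ⟨j, rfl⟩
  · rw [R.sigmaMap_of_isPos i hp]
    by_cases he : v = Pi.single i 1
    · subst he; rw [R.sref_single_self]; exact Or.inr ⟨i, rfl⟩
    · exact Or.inl (R.sref_isPos i hp he)
  · by_cases hji : j = i
    · subst hji; rw [R.sigmaMap_negSingle_self]; exact Or.inl (R.isPos_single j)
    · rw [R.sigmaMap_negSingle_of_ne i j hji]; exact Or.inr ⟨j, rfl⟩

lemma sigmaMap_sigmaMap (i : Fin n) {v : Fin n → ℤ} (h : v ∈ R.almostPos) :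
    R.sigmaMap i (R.sigmaMap i v) = v := by
  rcases h with hp | ⟨j, rfl⟩
  · rw [R.sigmaMap_of_isPos i hp]
    by_cases he : v = Pi.single i 1
    · subst he
      rw [R.sref_single_self, R.sigmaMap_negSingle_self]
    · have hp' : R.IsPos (R.sref i v) := R.sref_isPos i hp he
      rw [R.sigmaMap_of_isPos i hp', R.sref_sref]
  · by_cases hji : j = i
    · subst hji
      rw [R.sigmaMap_negSingle_self,
        R.sigmaMap_of_isPos j (R.isPos_single j), R.sref_single_self]
    · rw [R.sigmaMap_negSingle_of_ne i j hji, R.sigmaMap_negSingle_of_ne i j hji]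

lemma tauC_nil (v : Fin n → ℤ) : R.tauC [] v = v := rfl
lemma tauC_cons (i : Fin n) (t : List (Fin n)) (v : Fin n → ℤ) :
    R.tauC (i :: t) v = R.sigmaMap i (R.tauC t v) := rfl
lemma tauCInv_nil (v : Fin n → ℤ) : R.tauCInv [] v = v := rfl
lemma tauCInv_cons (i : Fin n) (t : List (Fin n)) (v : Fin n → ℤ) :
    R.tauCInv (i :: t) v = R.tauCInv t (R.sigmaMap i v) := rfl

lemma tauC_mem (l : List (Fin n)) {v : Fin n → ℤ} (h : v ∈ R.almostPos) :
    R.tauC l v ∈ R.almostPos := by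
  induction l with
  | nil => exact h
  | cons i t ih => rw [tauC_cons]; exact R.sigmaMap_mem i ih

lemma tauCInv_mem (l : List (Fin n)) {v : Fin n → ℤ} (h : v ∈ R.almostPos) :
    R.tauCInv l v ∈ R.almostPos := by
  induction l generalizing v with
  | nil => exact h
  | cons i t ih => rw [tauCInv_cons]; exact ih (R.sigmaMap_mem i h)

lemma tauC_tauCInv (l : List (Fin n)) {v : Fin n → ℤ} (h : v ∈ R.almostPos) :
    R.tauC l (R.tauCInv l v) = v := by
  induction l generalizing v with
  | nil => rfl
  | cons i t ih =>
    rw [tauCInv_cons, tauC_cons, ih (R.sigmaMap_mem i h), R.sigmaMap_sigmaMap i h]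

lemma tauCInv_iterate_mem (l : List (Fin n)) (m : ℕ) {v : Fin n → ℤ}
    (h : v ∈ R.almostPos) : (R.tauCInv l)^[m] v ∈ R.almostPos := by
  induction m generalizing v with
  | zero => exact h
  | succ m ih => rw [Function.iterate_succ_apply]; exact ih (R.tauCInv_mem l h)

lemma tauCInv_inj (l : List (Fin n)) {x y : Fin n → ℤ} (hx : x ∈ R.almostPos)
    (hy : y ∈ R.almostPos) (h : R.tauCInv l x = R.tauCInv l y) : x = y := by
  have := congrArg (R.tauC l) h
  rwa [R.tauC_tauCInv l hx, R.tauC_tauCInv l hy] at this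

lemma tauCInv_iterate_inj (l : List (Fin n)) (m : ℕ) {x y : Fin n → ℤ}
    (hx : x ∈ R.almostPos) (hy : y ∈ R.almostPos)
    (h : (R.tauCInv l)^[m] x = (R.tauCInv l)^[m] y) : x = y := by
  induction m generalizing x y with
  | zero => exact h
  | succ m ih =>
    rw [Function.iterate_succ_apply, Function.iterate_succ_apply] at h
    exact R.tauCInv_inj l hx hy
      (ih (R.tauCInv_mem l hx) (R.tauCInv_mem l hy) h)

/-- Linear version of `tauCInv` (plain composition of reflections). -/
def sfold (l : List (Fin n)) (v : Fin n → ℤ) : Fin n → ℤ :=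
  l.foldl (fun u i => R.sref i u) v

lemma sfold_nil (v : Fin n → ℤ) : R.sfold [] v = v := rfl
lemma sfold_cons (i : Fin n) (t : List (Fin n)) (v : Fin n → ℤ) :
    R.sfold (i :: t) v = R.sfold t (R.sref i v) := rfl

lemma sref_add (i : Fin n) (x y : Fin n → ℤ) :
    R.sref i (x + y) = R.sref i x + R.sref i y := by
  have hcs : R.cs i (x + y) = R.cs i x + R.cs i y := by
    simp [cs, mul_add, Finset.sum_add_distrib]
  rw [sref_def, sref_def, sref_def, hcs]
  ext j; simp; ring

lemma sref_zero (i : Fin n) : R.sref i (0 : Fin n → ℤ) = 0 := by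
  have hcs : R.cs i (0 : Fin n → ℤ) = 0 := by simp [cs]
  rw [sref_def, hcs]; simp

lemma sfold_add (l : List (Fin n)) (x y : Fin n → ℤ) :
    R.sfold l (x + y) = R.sfold l x + R.sfold l y := by
  induction l generalizing x y with
  | nil => rfl
  | cons i t ih => rw [sfold_cons, R.sref_add, ih, sfold_cons, sfold_cons]

lemma sfold_zero (l : List (Fin n)) : R.sfold l (0 : Fin n → ℤ) = 0 := by
  induction l with
  | nil => rfl
  | cons i t ih => rw [sfold_cons, R.sref_zero, ih]

lemma sfold_sum {k : ℕ} (l : List (Fin n)) (F : ℕ → Fin n → ℤ) :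
    R.sfold l (∑ j ∈ Finset.range k, F j) = ∑ j ∈ Finset.range k, R.sfold l (F j) := by
  induction k with
  | zero => simpa using R.sfold_zero l
  | succ k ih => rw [Finset.sum_range_succ, R.sfold_add, ih, Finset.sum_range_succ]

lemma sfold_apply_not_mem (l : List (Fin n)) (v : Fin n → ℤ) {j : Fin n}
    (h : j ∉ l) : R.sfold l v j = v j := by
  induction l generalizing v with
  | nil => rfl
  | cons i t ih =>
    rw [sfold_cons, ih (R.sref i v) (fun ht => h (List.mem_cons_of_mem i ht)),
      R.sref_apply_ne i v (fun he => h (by rw [he]; exact List.mem_cons_self))]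

lemma tauCInv_negSingle_not_mem (l : List (Fin n)) {i : Fin n} (h : i ∉ l) :
    R.tauCInv l (-(Pi.single i 1 : Fin n → ℤ)) = -(Pi.single i 1 : Fin n → ℤ) := by
  induction l with
  | nil => rfl
  | cons j t ih =>
    rw [tauCInv_cons, R.sigmaMap_negSingle_of_ne j i
      (fun he => h (he ▸ (List.mem_cons_self : j ∈ j :: t)))]
    exact ih (fun ht => h (List.mem_cons_of_mem j ht))

/-- Dichotomy: applying `τ_c⁻¹` to a positive root either lands on a negative
simple root, or agrees with the plain reflection composition. -/
lemma tauCInv_dichotomy (l : List (Fin n)) (hnd : l.Nodup) {u : Fin n → ℤ}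
    (hu : R.IsPos u) :
    (∃ j, R.tauCInv l u = -(Pi.single j 1 : Fin n → ℤ)) ∨
      (R.IsPos (R.tauCInv l u) ∧ R.tauCInv l u = R.sfold l u) := by
  induction l generalizing u with
  | nil => exact Or.inr ⟨hu, rfl⟩
  | cons i t ih =>
    rw [tauCInv_cons, R.sigmaMap_of_isPos i hu]
    by_cases he : u = Pi.single i 1
    · subst he
      rw [R.sref_single_self, R.tauCInv_negSingle_not_mem t (List.nodup_cons.1 hnd).1]
      exact Or.inl ⟨i, rfl⟩
    · have hp : R.IsPos (R.sref i u) := R.sref_isPos i hu he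
      rcases ih (List.nodup_cons.1 hnd).2 hp with h | ⟨h1, h2⟩
      · exact Or.inl h
      · exact Or.inr ⟨h1, by rw [h2, sfold_cons]⟩

lemma cs_single (i k : Fin n) : R.cs i (Pi.single k 1) = R.C i k := by
  have : ∀ j, R.C i j * (Pi.single k 1 : Fin n → ℤ) j = if j = k then R.C i k else 0 := by
    intro j
    by_cases hj : j = k
    · subst hj; simp
    · simp [Pi.single_eq_of_ne hj, hj]
  simp [cs, this]

lemma sref_eq_self_of_cs_zero (i : Fin n) (v : Fin n → ℤ) (h : R.cs i v = 0) :
    R.sref i v = v := by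
  rw [sref_def, h]; simp

lemma sfold_fixed_cs (l : List (Fin n)) (hnd : l.Nodup) (v : Fin n → ℤ)
    (hfix : R.sfold l v = v) : ∀ i ∈ l, R.cs i v = 0 := by
  induction l with
  | nil => intro i hi; cases hi
  | cons i t ih =>
    rw [sfold_cons] at hfix
    obtain ⟨hit, hndt⟩ := List.nodup_cons.1 hnd
    have h1 : R.sref i v i = v i := by
      have := R.sfold_apply_not_mem t (R.sref i v) hit
      rw [hfix] at this; exact this.symm
    rw [R.sref_apply_self i v] at h1
    have hcs : R.cs i v = 0 := by omega
    have hv : R.sref i v = v := R.sref_eq_self_of_cs_zero i v hcs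
    rw [hv] at hfix
    intro j hj
    rcases List.mem_cons.1 hj with rfl | hjt
    · exact hcs
    · exact ih hndt hfix j hjt

/-- There is no nonzero nonnegative vector in the kernel of the Cartan matrix:
otherwise one can produce positive roots of unbounded height. -/
lemma no_null (v : Fin n → ℤ) (h0 : ∀ i, R.cs i v = 0) (hnn : ∀ i, 0 ≤ v i)
    (i0 : Fin n) (hpos : 0 < v i0) : False := by
  obtain ⟨d, hd, hsym⟩ := R.symmetrizable
  have hdec : ∀ i j, v i = 0 → 0 < v j → R.C i j = 0 := by
    intro i j hi hj
    have hterm : ∀ k ∈ Finset.univ, R.C i k * v k ≤ 0 := by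
      intro k _
      by_cases hk : k = i
      · subst hk; rw [hi]; simp
      · exact mul_nonpos_of_nonpos_of_nonneg (R.offdiag i k (fun he => hk he.symm))
          (hnn k)
    have hj0 := (Finset.sum_eq_zero_iff_of_nonpos hterm).1 (h0 i) j (Finset.mem_univ j)
    rcases mul_eq_zero.1 hj0 with h | h
    · exact h
    · omega
  have hsum_swap : ∀ (x : Fin n → ℤ) (k : Fin n),
      ∑ i, d i * x i * R.C i k = d k * R.cs k x := by
    intro x k
    rw [cs, Finset.mul_sum]
    apply Finset.sum_congr rfl
    intro i _
    calc d i * x i * R.C i k = d i * R.C i k * x i := by ring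
      _ = d k * R.C k i * x i := by rw [hsym]
      _ = d k * (R.C k i * x i) := by ring
  have hweight : ∀ r : Fin n → ℤ, ∑ i, d i * v i * R.cs i r = 0 := by
    intro r
    have hterm : ∀ i : Fin n, d i * v i * R.cs i r = ∑ j, d i * v i * (R.C i j * r j) := by
      intro i; rw [cs, Finset.mul_sum]
    rw [Finset.sum_congr rfl (fun i _ => hterm i), Finset.sum_comm]
    apply Finset.sum_eq_zero
    intro j _
    have h := hsum_swap v j
    rw [h0 j, mul_zero] at h
    calc ∑ i, d i * v i * (R.C i j * r j) = (∑ i, d i * v i * R.C i j) * r j := by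
          rw [Finset.sum_mul]; exact Finset.sum_congr rfl (fun i _ => by ring)
      _ = 0 := by rw [h, zero_mul]
  have hBinv : ∀ (x : Fin n → ℤ) (k : Fin n),
      ∑ i, d i * R.sref k x i * R.cs i (R.sref k x) = ∑ i, d i * x i * R.cs i x := by
    intro x k
    have hterm : ∀ i : Fin n, d i * R.sref k x i * R.cs i (R.sref k x)
        = d i * x i * R.cs i x - R.cs k x * (d i * x i * R.C i k)
          - (if i = k then R.cs k x * (d k * R.cs k x)
              - 2 * (R.cs k x * R.cs k x) * d k else 0) := by
      intro i
      rw [cs_sref]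
      by_cases hik : i = k
      · subst hik
        rw [R.sref_apply_self i x]
        simp only [eq_self_iff_true, if_true, R.diag i]
        ring
      · rw [R.sref_apply_ne k x hik]
        simp only [if_neg hik]
        ring
    rw [Finset.sum_congr rfl (fun i _ => hterm i), Finset.sum_sub_distrib,
      Finset.sum_sub_distrib, Finset.sum_ite_eq', ← Finset.mul_sum, hsum_swap]
    simp only [Finset.mem_univ, if_true]
    ring
  set P : (Fin n → ℤ) → Prop := fun r =>
    r ∈ R.roots ∧ (∀ i, 0 ≤ r i) ∧ (∀ i, v i = 0 → r i = 0) ∧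
      (∑ i, d i * r i * R.cs i r) = 2 * d i0 with hP
  have hP0 : P (Pi.single i0 1) := by
    refine ⟨R.simple_mem i0, (R.isPos_single i0).2, ?_, ?_⟩
    · intro i hi
      have hne : i ≠ i0 := fun he => by rw [he] at hi; omega
      exact Pi.single_eq_of_ne hne 1
    · have hterm : ∀ i : Fin n, d i * (Pi.single i0 1 : Fin n → ℤ) i * R.cs i (Pi.single i0 1)
          = if i = i0 then 2 * d i0 else 0 := by
        intro i
        rw [R.cs_single]
        by_cases hi : i = i0
        · subst hi; simp [R.diag]; ring
        · simp [Pi.single_eq_of_ne hi, hi]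
      simp [Finset.sum_congr rfl (fun i _ => hterm i)]
  have hstep : ∀ r : Fin n → ℤ, P r → ∃ r', P r' ∧ (∑ i, r i) < ∑ i, r' i := by
    intro r hr
    obtain ⟨hroot, hrnn, hsupp, hBr⟩ := hr
    have hk : ∃ k, 0 < v k ∧ R.cs k r < 0 := by
      by_contra hcon
      push_neg at hcon
      have hz : ∀ i, R.cs i r = 0 := by
        have hnonneg : ∀ i ∈ Finset.univ, 0 ≤ d i * v i * R.cs i r := by
          intro i _
          rcases lt_or_eq_of_le (hnn i) with hi | hi
          · exact mul_nonneg (mul_nonneg (le_of_lt (hd i)) (hnn i)) (hcon i hi)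
          · rw [← hi]; simp
        have hall := (Finset.sum_eq_zero_iff_of_nonneg hnonneg).1 (hweight r)
        intro i
        rcases lt_or_eq_of_le (hnn i) with hi | hi
        · have := hall i (Finset.mem_univ i)
          have hdi := hd i
          rcases mul_eq_zero.1 this with h | h
          · rcases mul_eq_zero.1 h with h | h <;> omega
          · exact h
        · rw [cs]
          apply Finset.sum_eq_zero
          intro j _
          by_cases hrj : r j = 0
          · rw [hrj, mul_zero]
          · have hvj : 0 < v j := by
              rcases lt_or_eq_of_le (hnn j) with h | h
              · exact h
              · exact absurd (hsupp j h.symm) hrj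
            rw [hdec i j hi.symm hvj, zero_mul]
      have : (∑ i, d i * r i * R.cs i r) = 0 := by
        apply Finset.sum_eq_zero
        intro i _
        rw [hz i, mul_zero]
      rw [hBr] at this
      have := hd i0
      omega
    obtain ⟨k, hvk, hcsk⟩ := hk
    refine ⟨R.sref k r, ⟨R.sref_mem k hroot, ?_, ?_, ?_⟩, ?_⟩
    · intro i
      by_cases hik : i = k
      · subst hik
        rw [R.sref_apply_self]
        have := hrnn i
        omega
      · rw [R.sref_apply_ne k r hik]; exact hrnn i
    · intro i hi
      have hik : i ≠ k := fun he => by rw [he] at hi; omega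
      rw [R.sref_apply_ne k r hik]; exact hsupp i hi
    · rw [hBinv r k]; exact hBr
    · have hterm : ∀ i : Fin n, R.sref k r i
          = r i + (if i = k then -R.cs k r else 0) := by
        intro i
        by_cases hik : i = k
        · subst hik; rw [R.sref_apply_self]; simp only [eq_self_iff_true, if_true]; ring
        · rw [R.sref_apply_ne k r hik]; simp [hik]
      rw [Finset.sum_congr rfl (fun i _ => hterm i), Finset.sum_add_distrib,
        Finset.sum_ite_eq']
      simp only [Finset.mem_univ, if_true]
      omega
  have hchain : ∀ r : {x : Fin n → ℤ // P x},
      ∃ r' : {x : Fin n → ℤ // P x}, (∑ i, r.1 i) < ∑ i, r'.1 i := by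
    rintro ⟨r, hr⟩
    obtain ⟨r', hr', hlt⟩ := hstep r hr
    exact ⟨⟨r', hr'⟩, hlt⟩
  let f : {x : Fin n → ℤ // P x} → {x : Fin n → ℤ // P x} :=
    fun r => (hchain r).choose
  have hf : ∀ r, (∑ i, r.1 i) < ∑ i, (f r).1 i := fun r => (hchain r).choose_spec
  let g : ℕ → {x : Fin n → ℤ // P x} := fun m => f^[m] ⟨Pi.single i0 1, hP0⟩
  have hmono : StrictMono (fun m => ∑ i, (g m).1 i) := by
    apply strictMono_nat_of_lt_succ
    intro m
    have : g (m + 1) = f (g m) := Function.iterate_succ_apply' f m _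
    rw [this]
    exact hf (g m)
  let g' : ℕ → {x // x ∈ R.roots} := fun m => ⟨(g m).1, (g m).2.1⟩
  obtain ⟨a, b, hab, heq⟩ := Finite.exists_ne_map_eq_of_infinite g'
  have : (∑ i, (g a).1 i) = ∑ i, (g b).1 i := by
    have hval : (g a).1 = (g b).1 :=
      congrArg (Subtype.val : {x // x ∈ R.roots} → (Fin n → ℤ)) heq
    rw [hval]
  exact hab (hmono.injective this)

/-- Every almost positive root eventually reaches a negative simple root under
iteration of `τ_c⁻¹`. -/
lemma exists_neg_simple (l : List (Fin n)) (hnd : l.Nodup) (hall : ∀ i, i ∈ l)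
    {γ : Fin n → ℤ} (hγ : γ ∈ R.almostPos) :
    ∃ m i, (R.tauCInv l)^[m] γ = -(Pi.single i 1 : Fin n → ℤ) := by
  by_contra hcon
  push_neg at hcon
  have hposIt : ∀ m, R.IsPos ((R.tauCInv l)^[m] γ) := by
    intro m
    rcases R.tauCInv_iterate_mem l m hγ with h | ⟨i, hi⟩
    · exact h
    · exact absurd hi (hcon m i)
  have hstep : ∀ m, (R.tauCInv l)^[m + 1] γ = R.sfold l ((R.tauCInv l)^[m] γ) := by
    intro m
    rw [Function.iterate_succ_apply']
    rcases R.tauCInv_dichotomy l hnd (hposIt m) with ⟨j, hj⟩ | ⟨-, h2⟩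
    · exact absurd
        (show (R.tauCInv l)^[m + 1] γ = -(Pi.single j 1 : Fin n → ℤ) by
          rw [Function.iterate_succ_apply']; exact hj) (hcon (m + 1) j)
    · exact h2
  -- pigeonhole: some iterate repeats
  let g : ℕ → {x // x ∈ R.roots} := fun m => ⟨(R.tauCInv l)^[m] γ, (hposIt m).1⟩
  obtain ⟨a, b, hab, heq⟩ := Finite.exists_ne_map_eq_of_infinite g
  have hvals : (R.tauCInv l)^[a] γ = (R.tauCInv l)^[b] γ :=
    congrArg (Subtype.val : {x // x ∈ R.roots} → (Fin n → ℤ)) heq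
  have hcycle : ∃ k, 0 < k ∧ (R.tauCInv l)^[k] γ = γ := by
    have key : ∀ a b : ℕ, a < b → (R.tauCInv l)^[a] γ = (R.tauCInv l)^[b] γ →
        ∃ k, 0 < k ∧ (R.tauCInv l)^[k] γ = γ := by
      intro a b hlt hv
      refine ⟨b - a, by omega, ?_⟩
      have hb : b = a + (b - a) := by omega
      rw [hb, Function.iterate_add_apply] at hv
      exact (R.tauCInv_iterate_inj l a hγ
        (R.tauCInv_iterate_mem l (b - a) hγ) hv).symm
    rcases lt_or_gt_of_ne hab with h | h
    · exact key a b h hvals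
    · exact key b a h hvals.symm
  obtain ⟨k, hk, hcyc⟩ := hcycle
  set v : Fin n → ℤ := ∑ j ∈ Finset.range k, (R.tauCInv l)^[j] γ with hv
  have hfix : R.sfold l v = v := by
    rw [hv, R.sfold_sum]
    have h1 := Finset.sum_range_succ' (fun j => (R.tauCInv l)^[j] γ) k
    have h2 := Finset.sum_range_succ (fun j => (R.tauCInv l)^[j] γ) k
    rw [hcyc] at h2
    have h3 : (∑ j ∈ Finset.range k, (R.tauCInv l)^[j + 1] γ) + γ
        = (∑ j ∈ Finset.range k, (R.tauCInv l)^[j] γ) + γ := by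
      simp only [Function.iterate_zero_apply] at h1
      rw [← h1]; exact h2
    have h4 := add_right_cancel h3
    calc ∑ j ∈ Finset.range k, R.sfold l ((R.tauCInv l)^[j] γ)
        = ∑ j ∈ Finset.range k, (R.tauCInv l)^[j + 1] γ :=
          Finset.sum_congr rfl (fun j _ => (hstep j).symm)
      _ = ∑ j ∈ Finset.range k, (R.tauCInv l)^[j] γ := h4
  have hcs : ∀ i, R.cs i v = 0 := fun i =>
    R.sfold_fixed_cs l hnd v hfix i (hall i)
  have hvnn : ∀ i, 0 ≤ v i := by
    intro i
    rw [hv, Finset.sum_apply]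
    exact Finset.sum_nonneg (fun j _ => (hposIt j).2 i)
  have hγpos : ∃ i0, 0 < γ i0 := by
    by_contra hc
    push_neg at hc
    have : γ = 0 := funext (fun i => le_antisymm (hc i) ((hposIt 0).2 i))
    exact R.isPos_ne_zero (hposIt 0) this
  obtain ⟨i0, hi0⟩ := hγpos
  have hvi0 : 0 < v i0 := by
    rw [hv, Finset.sum_apply]
    have hle : γ i0 ≤ ∑ j ∈ Finset.range k, ((R.tauCInv l)^[j] γ) i0 := by
      have := Finset.single_le_sum (f := fun j => ((R.tauCInv l)^[j] γ) i0)
        (fun j _ => (hposIt j).2 i0) (Finset.mem_range.2 hk)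
      simpa using this
    omega
  exact R.no_null v hcs hvnn i0 hvi0

end CrysRootDatum
/-- Two almost positive roots exchanged between two `c`-clusters sharing the rest of
their elements cannot have equal `τ_c`-depth: if `C' ∪ {α}` and `C' ∪ {β}` are both
`c`-clusters with `α ≠ β`, then `R_c(α) ≠ R_c(β)`.  Here `compat` is the
`c`-compatibility degree (the unique function satisfying the two characterizing
properties, taken as hypotheses `h1`, `h2`), a `c`-cluster is a maximal pairwise
`c`-compatible subset of `Φ_{≥-1}`, and every `c`-cluster has cardinality `n`
(hypothesis `hcard`). -/
theorem exchanged_roots_have_distinct_depth {n : ℕ} (R : CrysRootDatum n)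
    (l : List (Fin n)) (hnd : l.Nodup) (hall : ∀ i, i ∈ l)
    (compat : (Fin n → ℤ) → (Fin n → ℤ) → ℕ)
    (h1 : ∀ (i : Fin n) (β : Fin n → ℤ), β ∈ R.almostPos →
      compat (-(Pi.single i 1 : Fin n → ℤ)) β = (β i).toNat)
    (h2 : ∀ α β, α ∈ R.almostPos → β ∈ R.almostPos →
      compat (R.tauC l α) (R.tauC l β) = compat α β)
    (IsCluster : Finset (Fin n → ℤ) → Prop)
    (hcluster : ∀ s, IsCluster s ↔
      (↑s ⊆ R.almostPos ∧
       (∀ α ∈ s, ∀ β ∈ s, α ≠ β → compat α β = 0 ∧ compat β α = 0) ∧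
       (∀ γ ∈ R.almostPos, (∀ α ∈ s, α ≠ γ → compat α γ = 0 ∧ compat γ α = 0) → γ ∈ s)))
    (hcard : ∀ s, IsCluster s → s.card = n)
    (C' : Finset (Fin n → ℤ)) (α β : Fin n → ℤ) (hne : α ≠ β)
    (hα : α ∉ C') (hβ : β ∉ C')
    (hCα : IsCluster (insert α C')) (hCβ : IsCluster (insert β C')) :
    R.Rdepth l α ≠ R.Rdepth l β := by
  obtain ⟨hsubα, hpairα, hmaxα⟩ := (hcluster _).1 hCα
  obtain ⟨hsubβ, hpairβ, hmaxβ⟩ := (hcluster _).1 hCβ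
  have hαmem : α ∈ R.almostPos := hsubα (by simp)
  have hβmem : β ∈ R.almostPos := hsubβ (by simp)
  intro hdep
  obtain ⟨mα, iα, hiα⟩ := R.exists_neg_simple l hnd hall hαmem
  obtain ⟨mβ, iβ, hiβ⟩ := R.exists_neg_simple l hnd hall hβmem
  have hsetα : {m : ℕ | ∃ i, (R.tauCInv l)^[m] α
      = -(Pi.single i 1 : Fin n → ℤ)}.Nonempty := ⟨mα, iα, hiα⟩
  have hsetβ : {m : ℕ | ∃ i, (R.tauCInv l)^[m] β
      = -(Pi.single i 1 : Fin n → ℤ)}.Nonempty := ⟨mβ, iβ, hiβ⟩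
  obtain ⟨i, hi⟩ : ∃ i, (R.tauCInv l)^[R.Rdepth l α] α
      = -(Pi.single i 1 : Fin n → ℤ) := Nat.sInf_mem hsetα
  obtain ⟨j, hj⟩ : ∃ j, (R.tauCInv l)^[R.Rdepth l β] β
      = -(Pi.single j 1 : Fin n → ℤ) := Nat.sInf_mem hsetβ
  rw [← hdep] at hj
  have hij : i ≠ j := by
    rintro rfl
    exact hne (R.tauCInv_iterate_inj l (R.Rdepth l α) hαmem hβmem (hi.trans hj.symm))
  have hlift : ∀ (k : ℕ) (x y : Fin n → ℤ), x ∈ R.almostPos → y ∈ R.almostPos →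
      compat ((R.tauCInv l)^[k] x) ((R.tauCInv l)^[k] y) = compat x y := by
    intro k
    induction k with
    | zero => intro x y _ _; rfl
    | succ k ih =>
      intro x y hx hy
      rw [Function.iterate_succ_apply, Function.iterate_succ_apply,
        ih _ _ (R.tauCInv_mem l hx) (R.tauCInv_mem l hy)]
      have h := h2 (R.tauCInv l x) (R.tauCInv l y)
        (R.tauCInv_mem l hx) (R.tauCInv_mem l hy)
      rw [R.tauC_tauCInv l hx, R.tauC_tauCInv l hy] at h
      exact h.symm
  have hc1 : compat α β = 0 := by
    have h := hlift (R.Rdepth l α) α β hαmem hβmem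
    rw [hi, hj] at h
    rw [← h, h1 i _ (Or.inr ⟨j, rfl⟩)]
    simp [Pi.single_eq_of_ne hij]
  have hc2 : compat β α = 0 := by
    have h := hlift (R.Rdepth l α) β α hβmem hαmem
    rw [hi, hj] at h
    rw [← h, h1 j _ (Or.inr ⟨i, rfl⟩)]
    simp [Pi.single_eq_of_ne hij.symm]
  have hβin : β ∈ insert α C' := by
    apply hmaxα β hβmem
    intro δ hδ hδβ
    rcases Finset.mem_insert.1 hδ with rfl | hδC
    · exact ⟨hc1, hc2⟩
    · exact hpairβ δ (Finset.mem_insert_of_mem hδC) β (Finset.mem_insert_self β C') hδβ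
  rcases Finset.mem_insert.1 hβin with h | h
  · exact hne h.symm
  · exact hβ h
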